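/- arXiv:2407.19885 — 2 statements merged into one kernel-verified Lean document; each statement's English description precedes it below -/
import Mathlib

section
/- For all real x with |x| < π/2, log(cosh x) = ∑_{k≥1} (2x/π)^{2k} · ((-1)^{k-1}/k) · (1 - 1/4^k) · ζ(2k), where ζ is the Riemann zeta function. -/
open Real
open Filter Topology

lemma sinh_prod_tendsto (t : ℝ) (ht : t ≠ 0) :
    Tendsto (fun n : ℕ => ∏ j ∈ Finset.range n, (1 + t ^ 2 / (π ^ 2 * ((j : ℝ) + 1) ^ 2)))
      atTop (𝓝 (Real.sinh t / t)) := by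
  have hπ : (π : ℂ) ≠ 0 := by exact_mod_cast Real.pi_ne_zero
  have h := Complex.tendsto_euler_sin_prod (t * Complex.I / π)
  have hfac : ∀ j : ℕ, ((1 : ℂ) - (t * Complex.I / π) ^ 2 / ((j : ℂ) + 1) ^ 2)
      = ((1 + t ^ 2 / (π ^ 2 * ((j : ℝ) + 1) ^ 2) : ℝ) : ℂ) := by
    intro j
    have h2 : ((t : ℂ) * Complex.I / π) ^ 2 = -((t : ℂ) ^ 2 / (π : ℂ) ^ 2) := by
      rw [div_pow, mul_pow, Complex.I_sq]; ring
    rw [h2]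
    push_cast
    have hj : ((j : ℂ) + 1) ≠ 0 := Nat.cast_add_one_ne_zero j
    field_simp
    ring
  have key : ∀ n : ℕ, (π : ℂ) * (t * Complex.I / π) *
      ∏ j ∈ Finset.range n, ((1 : ℂ) - (t * Complex.I / π) ^ 2 / ((j : ℂ) + 1) ^ 2)
      = (t * Complex.I) * ((∏ j ∈ Finset.range n,
          (1 + t ^ 2 / (π ^ 2 * ((j : ℝ) + 1) ^ 2)) : ℝ) : ℂ) := by
    intro n
    rw [Finset.prod_congr rfl (fun j _ => hfac j), ← Complex.ofReal_prod]
    rw [mul_div_assoc', mul_comm (π : ℂ), mul_div_assoc, div_self hπ, mul_one]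
  simp_rw [key] at h
  have hsin : Complex.sin ((π : ℂ) * (t * Complex.I / π)) = (Real.sinh t : ℂ) * Complex.I := by
    rw [mul_div_assoc', mul_comm (π : ℂ), mul_div_assoc, div_self hπ, mul_one,
      Complex.sin_mul_I, Complex.ofReal_sinh]
  rw [hsin] at h
  have htI : (t : ℂ) * Complex.I ≠ 0 := by
    simp [Complex.I_ne_zero, ht]
  have h2 := h.div_const ((t : ℂ) * Complex.I)
  have e : ∀ r : ℝ, ((t:ℂ) * Complex.I * (r : ℂ)) / ((t:ℂ) * Complex.I) = (r : ℂ) := by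
    intro r; rw [mul_comm, mul_div_assoc, div_self htI, mul_one]
  simp_rw [e] at h2
  have h3 : ((Real.sinh t : ℂ) * Complex.I) / ((t : ℂ) * Complex.I)
      = ((Real.sinh t / t : ℝ) : ℂ) := by
    push_cast
    rw [mul_div_mul_right _ _ Complex.I_ne_zero]
  rw [h3] at h2
  rw [← Filter.tendsto_ofReal_iff]
  convert h2 using 2

lemma hasSum_log_sinh (t : ℝ) (ht : t ≠ 0) :
    HasSum (fun n : ℕ => Real.log (1 + t ^ 2 / (π ^ 2 * ((n : ℝ) + 1) ^ 2)))
      (Real.log (Real.sinh t / t)) := by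
  set f : ℕ → ℝ := fun n => 1 + t ^ 2 / (π ^ 2 * ((n : ℝ) + 1) ^ 2) with hf
  have hfpos : ∀ n, 0 < f n := by
    intro n
    have : 0 ≤ t ^ 2 / (π ^ 2 * ((n : ℝ) + 1) ^ 2) := by positivity
    simp only [hf]; linarith
  have hf1 : ∀ n, 1 ≤ f n := by
    intro n
    have : 0 ≤ t ^ 2 / (π ^ 2 * ((n : ℝ) + 1) ^ 2) := by positivity
    simp only [hf]; linarith
  have hLpos : 0 < Real.sinh t / t := by
    rcases lt_or_gt_of_ne ht with h | h
    · exact div_pos_of_neg_of_neg (by simpa using Real.sinh_neg_iff.mpr h) h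
    · exact div_pos (Real.sinh_pos_iff.mpr h) h
  have hlog : Tendsto (fun n : ℕ => ∑ j ∈ Finset.range n, Real.log (f j)) atTop
      (𝓝 (Real.log (Real.sinh t / t))) := by
    have h1 := (Real.continuousAt_log hLpos.ne').tendsto.comp (sinh_prod_tendsto t ht)
    refine h1.congr fun n => ?_
    rw [Function.comp_apply, Real.log_prod fun j _ => (hfpos j).ne']
  have hnonneg : ∀ n, 0 ≤ Real.log (f n) := fun n => Real.log_nonneg (hf1 n)
  have hmono : Monotone (fun n : ℕ => ∑ j ∈ Finset.range n, Real.log (f j)) :=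
    monotone_nat_of_le_succ fun n => by
      rw [Finset.sum_range_succ]; linarith [hnonneg n]
  have hsum : Summable fun n => Real.log (f n) :=
    summable_of_sum_range_le hnonneg fun n => hmono.ge_of_tendsto hlog n
  have := tendsto_nhds_unique hsum.hasSum.tendsto_sum_nat hlog
  exact this ▸ hsum.hasSum

lemma hasSum_log_cosh (x : ℝ) (hx : x ≠ 0) :
    HasSum (fun n : ℕ => Real.log (1 + (2*x) ^ 2 / (π ^ 2 * ((n : ℝ) + 1) ^ 2))
        - Real.log (1 + x ^ 2 / (π ^ 2 * ((n : ℝ) + 1) ^ 2)))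
      (Real.log (Real.cosh x)) := by
  have h2x : (2 : ℝ) * x ≠ 0 := by simpa using hx
  have h := (hasSum_log_sinh (2*x) h2x).sub (hasSum_log_sinh x hx)
  convert h using 1
  · rfl
  have hsx : Real.sinh x ≠ 0 := by
    exact Real.sinh_ne_zero.mpr hx
  rw [← Real.log_div (div_ne_zero (by simpa using h2x) h2x) (div_ne_zero hsx hx)]
  congr 1
  rw [Real.sinh_two_mul]
  field_simp

lemma hasSum_log_one_add_sq {t : ℝ} (ht : |t| < 1) :
    HasSum (fun k : ℕ => (-1) ^ k * t ^ (2 * (k + 1)) / ((k : ℝ) + 1))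
      (Real.log (1 + t ^ 2)) := by
  have h2 : |(-(t ^ 2))| < 1 := by
    rw [abs_neg, abs_of_nonneg (sq_nonneg t)]
    nlinarith [abs_nonneg t, sq_abs t]
  have h := (hasSum_pow_div_log_of_abs_lt_one h2).neg
  rw [neg_neg, sub_neg_eq_add] at h
  refine HasSum.congr_fun h fun k => ?_
  rw [neg_pow, pow_mul]
  ring

set_option maxHeartbeats 1000000 in
lemma real_core (x : ℝ) (hx : |x| < π / 2) (hx0 : x ≠ 0) :
    HasSum (fun k : ℕ => (2*x/π) ^ (2*(k+1)) * ((-1) ^ k / ((k:ℝ)+1)) * (1 - 1/4^(k+1)) *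
        ∑' n : ℕ, 1 / ((n:ℝ)+1) ^ (2*(k+1)))
      (Real.log (Real.cosh x)) := by
  have hπ : (0:ℝ) < π := Real.pi_pos
  set F : ℕ × ℕ → ℝ := fun p =>
    (-1) ^ p.1 / ((p.1:ℝ)+1) * ((2*x/(π*((p.2:ℝ)+1))) ^ (2*(p.1+1)) -
      (x/(π*((p.2:ℝ)+1))) ^ (2*(p.1+1))) with hF
  have hr : (2*|x|/π) < 1 := by
    rw [div_lt_one hπ]; linarith [abs_lt.mp hx]
  have hr0 : 0 ≤ 2*|x|/π := by positivity
  -- summability over the product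
  have hZ2 : Summable (fun n : ℕ => 1 / ((n:ℝ)+1) ^ 2) := by
    have := (summable_nat_add_iff (f := fun n : ℕ => 1 / (n:ℝ) ^ 2) 1).mpr
      (Real.summable_one_div_nat_pow.mpr one_lt_two)
    refine this.congr fun n => by push_cast; ring
  have hq1 : (2*|x|/π) ^ 2 < 1 := by nlinarith
  have hq0 : (0:ℝ) ≤ (2*|x|/π) ^ 2 := sq_nonneg _
  have hgeo : Summable (fun k : ℕ => ((2*|x|/π) ^ 2) ^ (k+1)) :=
    (summable_nat_add_iff 1).mpr (summable_geometric_of_lt_one hq0 hq1)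
  have hG : Summable (fun p : ℕ × ℕ => ((2*|x|/π) ^ 2) ^ (p.1+1) * (1 / ((p.2:ℝ)+1) ^ 2)) :=
    hgeo.mul_of_nonneg hZ2 (fun k => by positivity) (fun n => by positivity)
  have hbound : ∀ p : ℕ × ℕ, ‖F p‖ ≤ ((2*|x|/π) ^ 2) ^ (p.1+1) * (1 / ((p.2:ℝ)+1) ^ 2) := by
    rintro ⟨k, n⟩
    have hn1 : (1:ℝ) ≤ (n:ℝ)+1 := by
      have := Nat.cast_nonneg (α := ℝ) n; linarith
    have ha : (2*x/(π*((n:ℝ)+1))) ^ (2*(k+1)) = ((2*x/(π*((n:ℝ)+1)))^2) ^ (k+1) := by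
      rw [← pow_mul]
    have hb : (x/(π*((n:ℝ)+1))) ^ (2*(k+1)) = ((x/(π*((n:ℝ)+1)))^2) ^ (k+1) := by
      rw [← pow_mul]
    have hba : ((x/(π*((n:ℝ)+1)))^2) ^ (k+1) ≤ ((2*x/(π*((n:ℝ)+1)))^2) ^ (k+1) := by
      apply pow_le_pow_left₀ (sq_nonneg _)
      have he : (2*x/(π*((n:ℝ)+1)))^2 = 4 * (x/(π*((n:ℝ)+1)))^2 := by ring
      linarith [sq_nonneg (x/(π*((n:ℝ)+1)))]
    have hb0 : (0:ℝ) ≤ ((x/(π*((n:ℝ)+1)))^2) ^ (k+1) := by positivity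
    have habs : ‖F (k, n)‖ ≤ ((2*x/(π*((n:ℝ)+1)))^2) ^ (k+1) := by
      rw [hF]
      simp only [Real.norm_eq_abs, abs_mul, abs_div]
      rw [abs_pow, abs_neg, abs_one, one_pow]
      have h1 : |((k:ℝ)+1)| = (k:ℝ)+1 := abs_of_pos (by positivity)
      rw [h1, ha, hb]
      have h2 : |((2*x/(π*((n:ℝ)+1)))^2) ^ (k+1) - ((x/(π*((n:ℝ)+1)))^2) ^ (k+1)|
          = ((2*x/(π*((n:ℝ)+1)))^2) ^ (k+1) - ((x/(π*((n:ℝ)+1)))^2) ^ (k+1) :=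
        abs_of_nonneg (by linarith)
      rw [h2]
      calc 1 / ((k:ℝ)+1) * (((2*x/(π*((n:ℝ)+1)))^2) ^ (k+1) - ((x/(π*((n:ℝ)+1)))^2) ^ (k+1))
          ≤ 1 * (((2*x/(π*((n:ℝ)+1)))^2) ^ (k+1) - ((x/(π*((n:ℝ)+1)))^2) ^ (k+1)) := by
            apply mul_le_mul_of_nonneg_right _ (by linarith)
            rw [div_le_one (by positivity)]; linarith [Nat.cast_nonneg (α := ℝ) k]
        _ ≤ ((2*x/(π*((n:ℝ)+1)))^2) ^ (k+1) := by rw [one_mul]; linarith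
    refine habs.trans ?_
    have key : (2*x/(π*((n:ℝ)+1)))^2 = ((2*|x|/π))^2 * (1/((n:ℝ)+1)^2) := by
      have hax : |x|^2 = x^2 := sq_abs x
      field_simp
      nlinarith [sq_abs x]
    rw [key, mul_pow]
    show ((2*|x|/π)^2)^(k+1) * ((1/((n:ℝ)+1)^2))^(k+1)
        ≤ ((2*|x|/π)^2)^(k+1) * (1/((n:ℝ)+1)^2)
    apply mul_le_mul_of_nonneg_left _ (by positivity)
    calc ((1/((n:ℝ)+1)^2))^(k+1) ≤ ((1/((n:ℝ)+1)^2))^1 := by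
          apply pow_le_pow_of_le_one (by positivity) _ (by omega)
          rw [div_le_one (by positivity)]
          nlinarith
      _ = 1/((n:ℝ)+1)^2 := pow_one _
  have hFs : Summable F := Summable.of_norm_bounded hG hbound
  -- fiberwise along n (for fixed k): gives target terms
  have hB : ∀ k : ℕ, HasSum (fun n : ℕ => F (k, n))
      ((2*x/π) ^ (2*(k+1)) * ((-1) ^ k / ((k:ℝ)+1)) * (1 - 1/4^(k+1)) *
        ∑' n : ℕ, 1 / ((n:ℝ)+1) ^ (2*(k+1))) := by
    intro k
    have hZs : Summable (fun n : ℕ => 1 / ((n:ℝ)+1) ^ (2*(k+1))) := by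
      have := (summable_nat_add_iff (f := fun n : ℕ => 1 / (n:ℝ) ^ (2*(k+1))) 1).mpr
        (Real.summable_one_div_nat_pow.mpr (by omega))
      refine this.congr fun n => by push_cast; ring
    have := hZs.hasSum.mul_left
      ((2*x/π) ^ (2*(k+1)) * ((-1) ^ k / ((k:ℝ)+1)) * (1 - 1/4^(k+1)))
    refine HasSum.congr_fun this fun n => ?_
    rw [hF]
    have hn0 : ((n:ℝ)+1) ≠ 0 := by positivity
    have h4 : (4:ℝ)^(k+1) = 2^(2*(k+1)) := by rw [pow_mul]; norm_num
    field_simp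
    rw [h4, div_pow, div_pow, div_pow, mul_pow (2:ℝ) x, mul_pow π ((n:ℝ)+1)]
    field_simp
  -- fiberwise along k (for fixed n): gives log terms
  have hA : ∀ n : ℕ, HasSum (fun k : ℕ => F (k, n))
      (Real.log (1 + (2*x) ^ 2 / (π ^ 2 * ((n : ℝ) + 1) ^ 2))
        - Real.log (1 + x ^ 2 / (π ^ 2 * ((n : ℝ) + 1) ^ 2))) := by
    intro n
    have hn1 : (1:ℝ) ≤ (n:ℝ)+1 := by
      have := Nat.cast_nonneg (α := ℝ) n; linarith
    have ht1 : |2*x/(π*((n:ℝ)+1))| < 1 := by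
      rw [abs_div, abs_of_pos (by positivity : (0:ℝ) < π*((n:ℝ)+1)), div_lt_one (by positivity)]
      have : |2*x| = 2*|x| := by rw [abs_mul]; norm_num
      rw [this]
      nlinarith [abs_lt.mp hx]
    have ht2 : |x/(π*((n:ℝ)+1))| < 1 := by
      rw [abs_div, abs_of_pos (by positivity : (0:ℝ) < π*((n:ℝ)+1)), div_lt_one (by positivity)]
      nlinarith [abs_lt.mp hx, abs_nonneg x]
    have h1 := hasSum_log_one_add_sq ht1
    have h2 := hasSum_log_one_add_sq ht2
    have e1 : (2*x/(π*((n:ℝ)+1)))^2 = (2*x)^2 / (π^2*((n:ℝ)+1)^2) := by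
      rw [div_pow, mul_pow π ((n:ℝ)+1)]
    have e2 : (x/(π*((n:ℝ)+1)))^2 = x^2 / (π^2*((n:ℝ)+1)^2) := by
      rw [div_pow, mul_pow π ((n:ℝ)+1)]
    rw [e1] at h1; rw [e2] at h2
    refine HasSum.congr_fun (h1.sub h2) fun k => ?_
    rw [hF]
    ring
  -- combine
  have hT := hFs.hasSum
  have hsw : HasSum (fun p : ℕ × ℕ => F (p.2, p.1)) (∑' p, F p) := by
    have := ((Equiv.prodComm ℕ ℕ).hasSum_iff (f := F) (a := ∑' p, F p)).mpr hT
    exact this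
  have hlogsum := hsw.prod_fiberwise hA
  have hTeq : (∑' p, F p) = Real.log (Real.cosh x) :=
    hlogsum.unique (hasSum_log_cosh x hx0)
  have := hT.prod_fiberwise hB
  rwa [hTeq] at this

lemma zeta_ofReal (k : ℕ) :
    riemannZeta (2 * ((k:ℂ) + 1)) = ((∑' n : ℕ, 1 / ((n:ℝ)+1) ^ (2*(k+1)) : ℝ) : ℂ) := by
  have harg : (2 * ((k:ℂ) + 1)) = ((2*(k+1) : ℕ) : ℂ) := by push_cast; ring
  rw [harg, zeta_nat_eq_tsum_of_gt_one (by omega)]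
  have hre : ∑' n : ℕ, 1 / ((n:ℝ)) ^ (2*(k+1)) = ∑' n : ℕ, 1 / ((n:ℝ)+1) ^ (2*(k+1)) := by
    have hs : Summable (fun n : ℕ => 1 / ((n:ℝ)) ^ (2*(k+1))) :=
      Real.summable_one_div_nat_pow.mpr (by omega)
    rw [Summable.tsum_eq_zero_add hs]
    simp only [Nat.cast_zero, Nat.cast_add, Nat.cast_one]
    rw [zero_pow (by omega), div_zero, zero_add]
  rw [← hre, Complex.ofReal_tsum]
  congr 1
  funext n
  push_cast
  ring

theorem stmt_18 (x : ℝ) (hx : |x| < π / 2) :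
    (Real.log (Real.cosh x) : ℂ) =
      ∑' k : ℕ, ((2 * x / π : ℝ) : ℂ) ^ (2 * (k + 1)) * ((-1) ^ (k + 1 - 1) / ((k : ℂ) + 1)) *
        (1 - 1 / 4 ^ (k + 1)) * riemannZeta (2 * (k + 1)) := by
  rcases eq_or_ne x 0 with rfl | hx0
  · simp only [mul_zero, zero_div, Complex.ofReal_zero]
    rw [Real.cosh_zero, Real.log_one, Complex.ofReal_zero]
    symm
    have : ∀ k : ℕ, (0:ℂ) ^ (2 * (k + 1)) * ((-1) ^ (k + 1 - 1) / ((k:ℂ) + 1)) *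
        (1 - 1 / 4 ^ (k + 1)) * riemannZeta (2 * ((k:ℂ) + 1)) = 0 := by
      intro k
      rw [zero_pow (by omega : 2*(k+1) ≠ 0)]
      ring
    rw [tsum_congr this, tsum_zero]
  · have h := real_core x hx hx0
    rw [← h.tsum_eq, Complex.ofReal_tsum]
    congr 1
    funext k
    rw [zeta_ofReal k]
    push_cast
    ring
end

section
/- For all real x with |x| < π/2, tanh x = -∑_{k≥1} E_{2k-1} · 2^{2k-1} x^{2k-1}/(2k-1)!, where E_n are the Euler numbers. -/
open Real
open scoped NNReal ENNReal

noncomputable def eulerNumber (n : ℕ) : ℚ :=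
  Nat.strongRecOn n fun n ih =>
    if n = 0 then 1
    else -(1/2) * ∑ i : Fin n, (n.choose i : ℚ) * ih i i.isLt

lemma eulerNumber_def (n : ℕ) : eulerNumber n =
    if n = 0 then 1 else -(1/2) * ∑ i : Fin n, (n.choose i : ℚ) * eulerNumber i := by
  rw [eulerNumber]; unfold Nat.strongRecOn; rw [WellFounded.fix_eq]; rfl

lemma eulerNumber_zero : eulerNumber 0 = 1 := by rw [eulerNumber_def]; norm_num

lemma eulerNumber_rec {n : ℕ} (hn : n ≠ 0) :
    (∑ i ∈ Finset.range n, (n.choose i : ℚ) * eulerNumber i) = -2 * eulerNumber n := by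
  rw [eulerNumber_def n, if_neg hn, Finset.sum_range fun i => (n.choose i : ℚ) * eulerNumber i]
  ring

noncomputable def qAux (n : ℕ) : ℂ := 2 ^ n / n.factorial + (if n = 0 then 1 else 0)
noncomputable def cAux (n : ℕ) : ℂ := (eulerNumber n : ℂ) * 2 ^ n / n.factorial

lemma qAux_zero : qAux 0 = 2 := by norm_num [qAux]
lemma cAux_zero : cAux 0 = 1 := by norm_num [cAux, eulerNumber_zero]

lemma key_conv (n : ℕ) :
    (∑ k ∈ Finset.range (n + 1), qAux k * cAux (n - k)) = if n = 0 then 2 else 0 := by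
  rcases eq_or_ne n 0 with rfl | hn
  · simp [qAux_zero, cAux_zero]
  · rw [if_neg hn]
    have hsplit : ∀ k, qAux k * cAux (n - k) =
        (2 ^ k / k.factorial) * cAux (n - k) + (if k = 0 then 1 else 0) * cAux (n - k) := by
      intro k; rw [qAux]; ring
    simp only [hsplit, Finset.sum_add_distrib]
    have h2 : (∑ k ∈ Finset.range (n + 1), (if k = 0 then (1:ℂ) else 0) * cAux (n - k)) = cAux n := by
      rw [Finset.sum_eq_single_of_mem 0 (Finset.mem_range.mpr n.succ_pos)]
      · simp
      · intro b _ hb; simp [hb]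
    rw [h2]
    have h1 : (∑ k ∈ Finset.range (n + 1), (2:ℂ) ^ k / k.factorial * cAux (n - k)) =
        (2 ^ n / n.factorial) * ∑ k ∈ Finset.range (n + 1), (n.choose k : ℂ) * (eulerNumber (n - k) : ℂ) := by
      rw [Finset.mul_sum]
      refine Finset.sum_congr rfl fun k hk => ?_
      have hkn : k ≤ n := Nat.lt_succ_iff.mp (Finset.mem_range.mp hk)
      rw [cAux, Nat.cast_choose ℂ hkn]
      have h2p : (2:ℂ) ^ k * 2 ^ (n - k) = 2 ^ n := by
        rw [← pow_add, Nat.add_sub_cancel' hkn]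
      have hkf : (k.factorial : ℂ) ≠ 0 := Nat.cast_ne_zero.mpr k.factorial_ne_zero
      have hnkf : ((n - k).factorial : ℂ) ≠ 0 := Nat.cast_ne_zero.mpr (n - k).factorial_ne_zero
      have hnf : (n.factorial : ℂ) ≠ 0 := Nat.cast_ne_zero.mpr n.factorial_ne_zero
      field_simp
      linear_combination (eulerNumber (n-k) : ℂ) * h2p
    rw [h1, ← Finset.sum_range_reflect]
    simp only [Nat.add_sub_cancel]
    have h3 : (∑ j ∈ Finset.range (n + 1), (n.choose (n - j) : ℂ) * (eulerNumber (n - (n - j)) : ℂ)) =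
        ∑ j ∈ Finset.range (n + 1), (n.choose j : ℂ) * (eulerNumber j : ℂ) := by
      refine Finset.sum_congr rfl fun j hj => ?_
      have hjn : j ≤ n := Nat.lt_succ_iff.mp (Finset.mem_range.mp hj)
      rw [Nat.choose_symm hjn, Nat.sub_sub_self hjn]
    rw [h3, Finset.sum_range_succ, Nat.choose_self]
    have h4 : (∑ j ∈ Finset.range n, (n.choose j : ℂ) * (eulerNumber j : ℂ)) =
        -2 * (eulerNumber n : ℂ) := by
      exact_mod_cast congrArg (Rat.cast : ℚ → ℂ) (eulerNumber_rec hn)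
    rw [h4, cAux]
    have hnf : (n.factorial : ℂ) ≠ 0 := Nat.cast_ne_zero.mpr n.factorial_ne_zero
    field_simp
    ring

lemma denom_ne_zero {z : ℂ} (hz : ‖z‖ < π / 2) : Complex.exp (2 * z) + 1 ≠ 0 := by
  intro h
  have h2 : Complex.exp (2 * z) = -1 := by linear_combination h
  have h4 : Complex.exp (2 * z + 2 * z) = 1 := by rw [Complex.exp_add, h2]; ring
  obtain ⟨m, hm⟩ := Complex.exp_eq_one_iff.mp h4
  have hz4 : 2 * z + 2 * z = 4 * z := by ring
  rw [hz4] at hm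
  have hnorm : (4:ℝ) * ‖z‖ = |(m:ℝ)| * (2 * π) := by
    have h5 := congrArg norm hm
    rw [norm_mul, norm_mul, norm_mul, Complex.norm_I] at h5
    simpa [Complex.norm_intCast, Complex.norm_real, Real.norm_eq_abs,
      abs_of_pos pi_pos] using h5
  have hm0 : m = 0 := by
    by_contra hm0
    have h1 : (1:ℝ) ≤ |(m:ℝ)| := by
      have h6 : (1:ℤ) ≤ |m| := Int.one_le_abs hm0
      calc (1:ℝ) ≤ ((|m| : ℤ) : ℝ) := by exact_mod_cast h6
        _ = |(m:ℝ)| := by push_cast; ring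
    nlinarith [pi_pos, norm_nonneg z]
  rw [hm0] at hm
  simp only [Int.cast_zero, zero_mul] at hm
  have hz0 : z = 0 := by
    have h7 : (4:ℂ) * z = 4 * 0 := by rw [hm]; ring
    exact mul_left_cancel₀ (by norm_num) h7
  rw [hz0, mul_zero, Complex.exp_zero] at h2
  norm_num [Complex.ext_iff] at h2

lemma tanh_eq_aux (t : ℝ) : 2 / (Real.exp (2 * t) + 1) = 1 - Real.tanh t := by
  have h1 : Real.exp (2 * t) = Real.exp t * Real.exp t := by rw [two_mul, Real.exp_add]
  have h2 : Real.exp t > 0 := Real.exp_pos t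
  have h3 : Real.cosh t > 0 := Real.cosh_pos t
  rw [Real.tanh_eq_sinh_div_cosh, Real.sinh_eq, Real.cosh_eq, Real.exp_neg, h1]
  field_simp
  ring

lemma hasSum_exp_aux (w : ℂ) : HasSum (fun n => w ^ n / n.factorial) (Complex.exp w) := by
  rw [Complex.exp_eq_exp_ℂ]
  exact NormedSpace.expSeries_div_hasSum_exp w

lemma qAux_hasSum (z : ℂ) : HasSum (fun n => qAux n * z ^ n) (Complex.exp (2 * z) + 1) := by
  have h3 := (hasSum_exp_aux (2 * z)).add (hasSum_ite_eq 0 (1:ℂ))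
  refine h3.congr_fun fun n => ?_
  rcases eq_or_ne n 0 with rfl | hn
  · simp [qAux]
  · simp only [qAux, hn, if_false, add_zero, mul_pow]
    ring

lemma qAux_norm_summable (z : ℂ) : Summable (fun n => ‖qAux n * z ^ n‖) := by
  have hb : Summable (fun n : ℕ => (2 * ‖z‖) ^ n / n.factorial + (if n = 0 then 1 else 0)) :=
    (Real.summable_pow_div_factorial (2 * ‖z‖)).add (hasSum_ite_eq 0 (1:ℝ)).summable
  refine hb.of_nonneg_of_le (fun n => norm_nonneg _) fun n => ?_
  rw [norm_mul]
  calc ‖qAux n‖ * ‖z ^ n‖ ≤ (‖((2:ℂ) ^ n / n.factorial)‖ + ‖(if n = 0 then (1:ℂ) else 0)‖) * ‖z ^ n‖ := by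
        gcongr; exact norm_add_le _ _
    _ ≤ (2 * ‖z‖) ^ n / n.factorial + (if n = 0 then 1 else 0) := by
        rcases eq_or_ne n 0 with rfl | hn
        · simp
        · simp only [hn, if_neg, norm_zero, add_zero, if_false]
          rw [norm_div, norm_pow, norm_pow]
          simp only [Complex.norm_natCast, Complex.norm_ofNat]
          rw [mul_pow, div_mul_eq_mul_div]

theorem stmt_19 (x : ℝ) (hx : |x| < π / 2) :
    Real.tanh x =
      -∑' k : ℕ, (eulerNumber (2 * (k + 1) - 1) : ℝ) *
        2 ^ (2 * (k + 1) - 1) * x ^ (2 * (k + 1) - 1) /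
          (Nat.factorial (2 * (k + 1) - 1)) := by
  have hpi : (0:ℝ) < π / 2 := by positivity
  set r : ℝ := (|x| + π / 2) / 2 with hrdef
  have hxr : |x| < r := by simp only [hrdef]; linarith
  have hrlt : r < π / 2 := by simp only [hrdef]; linarith
  have hr0 : 0 < r := by have := abs_nonneg x; simp only [hrdef]; linarith
  set R : ℝ≥0 := r.toNNReal with hRdef
  have hRr : (R : ℝ) = r := Real.coe_toNNReal r hr0.le
  have hR0 : 0 < R := by rwa [← NNReal.coe_pos, hRr]
  set F : ℂ → ℂ := fun z => 2 / (Complex.exp (2 * z) + 1) with hF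
  -- differentiability
  have hdiff : DifferentiableOn ℂ F (Metric.closedBall 0 (R:ℝ)) := by
    apply DifferentiableOn.div (differentiableOn_const _)
    · exact ((Complex.differentiable_exp.comp (differentiable_id.const_mul 2)).add_const 1).differentiableOn
    · intro z hz
      apply denom_ne_zero
      have h := Metric.mem_closedBall.mp hz
      rw [dist_zero_right, hRr] at h
      linarith
  have hp : HasFPowerSeriesOnBall F (cauchyPowerSeries F 0 R) 0 R :=
    hdiff.hasFPowerSeriesOnBall hR0
  set p := cauchyPowerSeries F 0 R with hpdef
  -- membership helper
  have hmem : ∀ z : ℂ, ‖z‖ < r → z ∈ Metric.eball (0:ℂ) (R : ℝ≥0∞) := by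
    intro z h
    have h2 : (‖z‖₊ : ℝ≥0∞) < (R : ℝ≥0∞) := by
      rw [ENNReal.coe_lt_coe, ← NNReal.coe_lt_coe, coe_nnnorm, hRr]
      exact h
    rw [Metric.mem_eball, edist_eq_enorm_sub, sub_zero, enorm_eq_nnnorm]; exact h2
  -- series representation
  have hu : ∀ z : ℂ, ‖z‖ < r → HasSum (fun n => p.coeff n * z ^ n) (F z) := by
    intro z hz
    have h := hp.hasSum (hmem z hz)
    rw [zero_add] at h
    refine h.congr_fun fun n => ?_
    rw [FormalMultilinearSeries.apply_eq_pow_smul_coeff, smul_eq_mul, mul_comm]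
  have hun : ∀ z : ℂ, ‖z‖ < r → Summable (fun n => ‖p.coeff n * z ^ n‖) := by
    intro z hz
    have h := p.summable_norm_apply (x := z) (EMetric.ball_subset_ball hp.r_le (hmem z hz))
    refine h.congr fun n => ?_
    rw [FormalMultilinearSeries.apply_eq_pow_smul_coeff, smul_eq_mul, mul_comm]
  set W : ℕ → ℂ := fun n => ∑ k ∈ Finset.range (n + 1), qAux k * p.coeff (n - k) with hWdef
  -- Cauchy product
  have hWsum : ∀ z : ℂ, ‖z‖ < r → HasSum (fun n => W n * z ^ n) 2 := by
    intro z hz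
    have h := hasSum_sum_range_mul_of_summable_norm (qAux_norm_summable z) (hun z hz)
    rw [(qAux_hasSum z).tsum_eq, (hu z hz).tsum_eq] at h
    have hval : (Complex.exp (2 * z) + 1) * F z = 2 := by
      rw [hF]
      have hd := denom_ne_zero (lt_trans hz hrlt)
      field_simp
    rw [hval] at h
    refine h.congr_fun fun n => ?_
    rw [hWdef, Finset.sum_mul]
    refine Finset.sum_congr rfl fun k hk => ?_
    have hkn : k ≤ n := Nat.lt_succ_iff.mp (Finset.mem_range.mp hk)
    have hzp : z ^ k * z ^ (n - k) = z ^ n := by rw [← pow_add, Nat.add_sub_cancel' hkn]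
    rw [← hzp]; ring
  -- W 0 = 2
  have hW0 : W 0 = 2 := by
    have h := hWsum 0 (by simpa using hr0)
    have h2 : HasSum (fun n => W n * (0:ℂ) ^ n) (W 0) := by
      refine (hasSum_ite_eq 0 (W 0)).congr_fun fun n => ?_
      rcases eq_or_ne n 0 with rfl | hn
      · simp
      · simp [hn, zero_pow hn]
    exact (h2.unique h)
  -- W n = 0 for n ≠ 0, via power series uniqueness
  have hWn : ∀ n : ℕ, n ≠ 0 → W n = 0 := by
    intro n hn
    set ρ : ℝ≥0 := (r / 2).toNNReal with hρdef
    have hρr : (ρ : ℝ) = r / 2 := Real.coe_toNNReal _ (by linarith)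
    have hρ0 : 0 < ρ := by rw [← NNReal.coe_pos, hρr]; linarith
    have hzρ : ‖((r/2 : ℝ) : ℂ)‖ = r / 2 := by
      rw [Complex.norm_real, Real.norm_eq_abs, abs_of_pos (by linarith)]
    have hsummW : Summable (fun n => ‖W n‖ * (ρ : ℝ) ^ n) := by
      have h := summable_norm_sum_mul_range_of_summable_norm
        (qAux_norm_summable ((r/2 : ℝ) : ℂ)) (hun ((r/2 : ℝ) : ℂ) (by rw [hzρ]; linarith))
      refine h.congr fun m => ?_
      have heq : (∑ k ∈ Finset.range (m + 1), (qAux k * ((r/2:ℝ):ℂ) ^ k) *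
          (p.coeff (m - k) * ((r/2:ℝ):ℂ) ^ (m - k))) = W m * ((r/2:ℝ):ℂ) ^ m := by
        rw [hWdef, Finset.sum_mul]
        refine Finset.sum_congr rfl fun k hk => ?_
        have hkn : k ≤ m := Nat.lt_succ_iff.mp (Finset.mem_range.mp hk)
        have hpw : ((r/2:ℝ):ℂ) ^ k * ((r/2:ℝ):ℂ) ^ (m - k) = ((r/2:ℝ):ℂ) ^ m := by
          rw [← pow_add, Nat.add_sub_cancel' hkn]
        calc qAux k * ((r/2:ℝ):ℂ) ^ k * (p.coeff (m - k) * ((r/2:ℝ):ℂ) ^ (m - k))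
            = qAux k * p.coeff (m - k) * (((r/2:ℝ):ℂ) ^ k * ((r/2:ℝ):ℂ) ^ (m - k)) := by ring
          _ = qAux k * p.coeff (m - k) * ((r/2:ℝ):ℂ) ^ m := by rw [hpw]
      rw [heq, norm_mul, norm_pow, hzρ, hρr]
    set σ : FormalMultilinearSeries ℂ ℂ ℂ := FormalMultilinearSeries.ofScalars ℂ W with hσdef
    have hσr : (ρ : ℝ≥0∞) ≤ σ.radius := by
      apply σ.le_radius_of_summable
      refine hsummW.congr fun m => ?_
      rw [hσdef, FormalMultilinearSeries.ofScalars_norm]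
    have hσball : HasFPowerSeriesOnBall (fun _ => (2:ℂ)) σ 0 ρ := by
      refine ⟨hσr, ENNReal.coe_pos.mpr hρ0, fun {y} hy => ?_⟩
      have hy' : ‖y‖ < r := by
        rw [Metric.mem_eball, edist_eq_enorm_sub, sub_zero, enorm_eq_nnnorm, ENNReal.coe_lt_coe,
          ← NNReal.coe_lt_coe, coe_nnnorm, hρr] at hy
        linarith
      have h := hWsum y hy'
      refine h.congr_fun fun m => ?_
      rw [hσdef, FormalMultilinearSeries.ofScalars_apply_eq, smul_eq_mul]
    have heq : σ = constFormalMultilinearSeries ℂ ℂ 2 :=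
      hσball.hasFPowerSeriesAt.eq_formalMultilinearSeries hasFPowerSeriesAt_const
    have h2 : σ n (fun _ => (1:ℂ)) = constFormalMultilinearSeries ℂ ℂ 2 n (fun _ => (1:ℂ)) := by
      rw [heq]
    rw [hσdef, FormalMultilinearSeries.ofScalars_apply_eq, smul_eq_mul, one_pow, mul_one,
      constFormalMultilinearSeries_apply_of_nonzero hn] at h2
    exact h2
  -- identify coefficients
  have hcoeff : ∀ n, p.coeff n = cAux n := by
    intro n
    induction n using Nat.strong_induction_on with
    | _ n IH =>
      rcases eq_or_ne n 0 with rfl | hn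
      · have h := hW0
        simp only [hWdef, zero_add, Finset.sum_range_one, Nat.sub_zero, qAux_zero] at h
        rw [cAux_zero]
        have : (2:ℂ) * p.coeff 0 = 2 * 1 := by rw [mul_one]; exact h
        exact mul_left_cancel₀ two_ne_zero this
      · have hWval := hWn n hn
        have hkey := key_conv n
        rw [if_neg hn] at hkey
        simp only [hWdef] at hWval
        rw [Finset.sum_range_succ'] at hWval hkey
        have hS : (∑ i ∈ Finset.range n, qAux (i + 1) * p.coeff (n - (i + 1))) =
            ∑ i ∈ Finset.range n, qAux (i + 1) * cAux (n - (i + 1)) := by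
          refine Finset.sum_congr rfl fun i hi => ?_
          rw [IH (n - (i + 1)) (Nat.sub_lt (Nat.pos_of_ne_zero hn) i.succ_pos)]
        rw [hS] at hWval
        simp only [Nat.sub_zero, qAux_zero] at hWval hkey
        have h2 : (2:ℂ) * p.coeff n = 2 * cAux n := by linear_combination hWval - hkey
        exact mul_left_cancel₀ two_ne_zero h2
  -- evaluate at ±x
  have hnx : ‖((x:ℝ) : ℂ)‖ < r := by rw [Complex.norm_real, Real.norm_eq_abs]; exact hxr
  have hnnx : ‖((-x:ℝ) : ℂ)‖ < r := by rw [Complex.norm_real, Real.norm_eq_abs, abs_neg]; exact hxr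
  have hFval : ∀ t : ℝ, F ((t:ℝ):ℂ) = ((1 - Real.tanh t : ℝ) : ℂ) := by
    intro t
    show (2:ℂ) / (Complex.exp (2 * ((t:ℝ):ℂ)) + 1) = ((1 - Real.tanh t : ℝ) : ℂ)
    rw [← tanh_eq_aux]
    push_cast [Complex.ofReal_exp]
    norm_num
  have hsx : HasSum (fun n => cAux n * ((x:ℝ):ℂ) ^ n) (((1 - Real.tanh x : ℝ) : ℂ)) := by
    rw [← hFval x]
    exact (hu _ hnx).congr_fun fun n => by rw [hcoeff]
  have hsnx : HasSum (fun n => cAux n * ((-x:ℝ):ℂ) ^ n) (((1 - Real.tanh (-x) : ℝ) : ℂ)) := by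
    rw [← hFval (-x)]
    exact (hu _ hnnx).congr_fun fun n => by rw [hcoeff]
  -- odd part
  have hodd : HasSum
      (fun n => (cAux n * ((-x:ℝ):ℂ) ^ n - cAux n * ((x:ℝ):ℂ) ^ n) / 2)
      ((Real.tanh x : ℝ) : ℂ) := by
    have h := (hsnx.sub hsx).div_const 2
    have hval : ((((1 - Real.tanh (-x) : ℝ) : ℂ)) - (((1 - Real.tanh x : ℝ) : ℂ))) / 2
        = ((Real.tanh x : ℝ) : ℂ) := by
      rw [Real.tanh_neg]
      push_cast
      ring
    rwa [hval] at h
  -- restrict to odd indices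
  have hg : Function.Injective (fun k : ℕ => 2 * k + 1) := by
    intro a b h
    have h2 : 2 * a + 1 = 2 * b + 1 := h
    omega
  have hzero : ∀ m : ℕ, m ∉ Set.range (fun k : ℕ => 2 * k + 1) →
      (cAux m * ((-x:ℝ):ℂ) ^ m - cAux m * ((x:ℝ):ℂ) ^ m) / 2 = 0 := by
    intro m hm
    have hme : Even m := by
      rcases Nat.even_or_odd m with h | h
      · exact h
      · obtain ⟨k, hk⟩ := h
        refine absurd ⟨k, ?_⟩ hm
        show 2 * k + 1 = m
        omega
    rw [show ((-x:ℝ):ℂ) = -((x:ℝ):ℂ) by push_cast; ring, hme.neg_pow]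
    ring
  have hoddsum := (Function.Injective.hasSum_iff hg hzero).mpr hodd
  -- identify terms
  set a : ℕ → ℝ := fun k => (eulerNumber (2 * k + 1) : ℝ) * 2 ^ (2 * k + 1) * x ^ (2 * k + 1) /
    (Nat.factorial (2 * k + 1)) with hadef
  have hterm : ∀ k : ℕ,
      ((fun n => (cAux n * ((-x:ℝ):ℂ) ^ n - cAux n * ((x:ℝ):ℂ) ^ n) / 2) ∘ (fun k : ℕ => 2 * k + 1)) k
      = ((-(a k) : ℝ) : ℂ) := by
    intro k
    have hoddn : Odd (2 * k + 1) := ⟨k, by ring⟩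
    show (cAux (2*k+1) * ((-x:ℝ):ℂ) ^ (2*k+1) - cAux (2*k+1) * ((x:ℝ):ℂ) ^ (2*k+1)) / 2 = _
    rw [show ((-x:ℝ):ℂ) = -((x:ℝ):ℂ) by push_cast; ring, hoddn.neg_pow]
    rw [cAux, hadef]
    push_cast
    ring
  have h6 : HasSum (fun k => ((-(a k) : ℝ) : ℂ)) ((Real.tanh x : ℝ) : ℂ) :=
    hoddsum.congr_fun fun k => (hterm k).symm
  have h7 : HasSum (fun k => -(a k)) (Real.tanh x) := Complex.hasSum_ofReal.mp h6
  have h8 : HasSum a (-(Real.tanh x)) := by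
    have := h7.neg
    simpa using this
  have h9 : (∑' k, a k) = -(Real.tanh x) := h8.tsum_eq
  have h10 : (fun k : ℕ => (eulerNumber (2 * (k + 1) - 1) : ℝ) *
      2 ^ (2 * (k + 1) - 1) * x ^ (2 * (k + 1) - 1) /
      (Nat.factorial (2 * (k + 1) - 1))) = a := by
    funext k
    have : 2 * (k + 1) - 1 = 2 * k + 1 := by omega
    rw [hadef, this]
  rw [h10, h9]
  ring
end
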